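/- Let G be the complete directed graph on a finite vertex set V with |V| ≥ 2, and let P be a set of edges of G such that in P every vertex has in-degree at most 1 and out-degree at most 1, and P contains no directed cycle (i.e., P is a vertex-disjoint union of simple directed paths, possibly together with isolated vertices). Then there exists a Hamiltonian cycle T of G with P ⊆ T. Consequently, for any edge weights w : E → {0,1}, there exists a Hamiltonian cycle T with w(T) ≥ w(P). -/

import Mathlib

open Finset

/-- `T` is a Hamiltonian cycle (tour) of the complete directed graph on `V`. -/
def IsHamCycle {V : Type*} [Fintype V] [DecidableEq V] (T : Finset (V × V)) : Prop :=
  ∃ σ : Equiv.Perm V, σ.IsCycle ∧ σ.support = Finset.univ ∧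
    T = Finset.univ.image (fun v => (v, σ v))

/-- Out-degree of `v` in the edge set `P`. -/
def outdeg {V : Type*} [DecidableEq V] (P : Finset (V × V)) (v : V) : ℕ :=
  (P.filter fun e => e.1 = v).card

/-- In-degree of `v` in the edge set `P`. -/
def indeg {V : Type*} [DecidableEq V] (P : Finset (V × V)) (v : V) : ℕ :=
  (P.filter fun e => e.2 = v).card

/-- `P` is a vertex-disjoint union of simple directed paths: every vertex has
in-degree ≤ 1 and out-degree ≤ 1 and there is no directed cycle (every
subset in which all vertices are balanced is empty). -/
def IsPathSystem {V : Type*} [DecidableEq V] (P : Finset (V × V)) : Prop :=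
  (∀ v, outdeg P v ≤ 1) ∧ (∀ v, indeg P v ≤ 1) ∧
  ∀ T ⊆ P, (∀ v, outdeg T v = indeg T v) → T = ∅



lemma my_not_mem_of_nodup_append {α : Type*} {v : α} {s r : List α}
    (h : (s ++ v :: r).Nodup) : v ∉ s ∧ v ∉ r := by
  rw [List.nodup_append] at h
  refine ⟨fun hv => h.2.2 v hv v List.mem_cons_self rfl, ?_⟩
  exact fun hv => (List.nodup_cons.mp h.2.1).1 hv

lemma my_split_unique {α : Type*} {v : α} (a : List α) :
    ∀ (c : List α) {b d : List α}, a ++ v :: b = c ++ v :: d → v ∉ a → v ∉ c →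
      a = c ∧ b = d := by
  induction a with
  | nil =>
    intro c b d h hva hvc
    cases c with
    | nil => simpa using h
    | cons y c' =>
      simp only [List.nil_append, List.cons_append, List.cons.injEq] at h
      exact absurd (h.1 ▸ (List.mem_cons_self : y ∈ y :: c')) hvc
  | cons x a' ih =>
    intro c b d h hva hvc
    cases c with
    | nil =>
      simp only [List.cons_append, List.nil_append, List.cons.injEq] at h
      exact absurd (h.1 ▸ (List.mem_cons_self : x ∈ x :: a')) hva
    | cons y c' =>
      simp only [List.cons_append, List.cons.injEq] at h
      obtain ⟨h1, h2⟩ := h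
      have := ih c' h2 (fun hv => hva (List.mem_cons_of_mem _ hv))
        (fun hv => hvc (List.mem_cons_of_mem _ hv))
      exact ⟨by rw [h1, this.1], this.2⟩

lemma my_infix_erase {α : Type*} [DecidableEq α] {x y u : α} {l : List α}
    (h : [x, y] <:+: l) (hx : x ≠ u) (hy : y ≠ u) : [x, y] <:+: l.erase u := by
  obtain ⟨s, t, hst⟩ := h
  subst hst
  rw [List.append_assoc]
  by_cases hu : u ∈ s
  · rw [List.erase_append_left _ hu]
    exact ⟨s.erase u, t, by simp⟩
  · rw [List.erase_append_right _ hu]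
    have : ([x, y] ++ t).erase u = [x, y] ++ t.erase u := by
      rw [List.cons_append, List.cons_append, List.nil_append,
        List.erase_cons_tail, List.erase_cons_tail] <;> simp [hx, hy]
    rw [this]
    exact ⟨s, t.erase u, by simp⟩

lemma my_infix_transfer {α : Type*} {x y u v : α} {a b : List α}
    (hnd : (a ++ v :: b).Nodup) (hy : y ≠ v)
    (h : [x, y] <:+: a ++ v :: b) :
    [x, y] <:+: a ++ u :: v :: b := by
  obtain ⟨s, t, hst⟩ := h
  have hva : v ∉ a := (my_not_mem_of_nodup_append hnd).1
  simp only [List.append_assoc, List.cons_append, List.nil_append] at hst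
  by_cases hx : x = v
  · subst hx
    have hnd' : (s ++ x :: y :: t).Nodup := hst ▸ hnd
    have hvs : x ∉ s := (my_not_mem_of_nodup_append hnd').1
    obtain ⟨hsa, hbt⟩ := my_split_unique s a hst hvs hva
    exact ⟨a ++ [u], t, by simp [hsa, hbt]⟩
  · have hvm : v ∈ s ++ x :: y :: t := by rw [hst]; simp
    simp only [List.mem_append, List.mem_cons] at hvm
    rcases hvm with hv | hv
    · obtain ⟨s₁, s₂, rfl⟩ := List.append_of_mem hv
      rw [List.append_assoc, List.cons_append] at hst
      have hnd' : (s₁ ++ v :: (s₂ ++ x :: y :: t)).Nodup := hst ▸ hnd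
      have hvs : v ∉ s₁ := (my_not_mem_of_nodup_append hnd').1
      obtain ⟨hsa, hbt⟩ := my_split_unique s₁ a hst hvs hva
      exact ⟨a ++ u :: v :: s₂, t, by simp [← hsa, hbt]⟩
    · rcases hv with hv | hv | hv
      · exact absurd hv.symm hx
      · exact absurd hv.symm hy
      · obtain ⟨t₁, t₂, rfl⟩ := List.append_of_mem hv
        have hst2 : (s ++ x :: y :: t₁) ++ v :: t₂ = a ++ v :: b := by
          rw [← hst]; simp
        have hnd' : ((s ++ x :: y :: t₁) ++ v :: t₂).Nodup := hst2 ▸ hnd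
        have hvs : v ∉ s ++ x :: y :: t₁ := (my_not_mem_of_nodup_append hnd').1
        obtain ⟨hsa, hbt⟩ := my_split_unique _ a hst2 hvs hva
        exact ⟨s, t₁ ++ u :: v :: b, by simp [← hsa]⟩

lemma my_card_eq_sum_outdeg {V : Type*} [Fintype V] [DecidableEq V] (P : Finset (V × V)) :
    P.card = ∑ v, outdeg P v :=
  Finset.card_eq_sum_card_fiberwise (f := fun e : V × V => e.1) (fun _ _ => mem_univ _)

lemma my_card_eq_sum_indeg {V : Type*} [Fintype V] [DecidableEq V] (P : Finset (V × V)) :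
    P.card = ∑ v, indeg P v :=
  Finset.card_eq_sum_card_fiberwise (f := fun e : V × V => e.2) (fun _ _ => mem_univ _)

lemma my_exists_source {V : Type*} [Fintype V] [DecidableEq V] {P : Finset (V × V)}
    (hP : IsPathSystem P) (hne : P.Nonempty) : ∃ e ∈ P, indeg P e.1 = 0 := by
  by_contra hcon
  push_neg at hcon
  obtain ⟨ho, hi, hacyc⟩ := hP
  set A := univ.filter (fun v : V => outdeg P v = 1) with hA
  set B := univ.filter (fun v : V => indeg P v = 1) with hB
  have hcard : ∀ (d : Finset (V × V) → V → ℕ), (∀ v, d P v ≤ 1) →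
      P.card = ∑ v, d P v →
      (univ.filter fun v : V => d P v = 1).card = P.card := by
    intro d hd hsum
    rw [hsum, ← Finset.sum_filter_add_sum_filter_not univ (fun v => d P v = 1)]
    have h1 : ∑ v ∈ univ.filter (fun v : V => d P v = 1), d P v
        = (univ.filter fun v : V => d P v = 1).card := by
      rw [Finset.card_eq_sum_ones]
      exact Finset.sum_congr rfl fun v hv => (mem_filter.mp hv).2
    have h2 : ∑ v ∈ univ.filter (fun v : V => ¬ d P v = 1), d P v = 0 := by
      refine Finset.sum_eq_zero fun v hv => ?_
      have := (mem_filter.mp hv).2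
      have := hd v
      omega
    rw [h1, h2, add_zero]
  have hcardA : A.card = P.card := hcard outdeg ho (my_card_eq_sum_outdeg P)
  have hcardB : B.card = P.card := hcard indeg hi (my_card_eq_sum_indeg P)
  have hAB : A ⊆ B := by
    intro v hv
    have hv1 : outdeg P v = 1 := (mem_filter.mp hv).2
    have : (P.filter fun e => e.1 = v).Nonempty := by
      rw [← Finset.card_pos, ← outdeg, hv1]; norm_num
    obtain ⟨e, he⟩ := this
    obtain ⟨heP, he1⟩ := mem_filter.mp he
    have := hcon e heP
    rw [he1] at this
    have := hi v
    exact mem_filter.mpr ⟨mem_univ _, by omega⟩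
  have hABeq : A = B := Finset.eq_of_subset_of_card_le hAB (by rw [hcardA, hcardB])
  have hbal : ∀ v, outdeg P v = indeg P v := by
    intro v
    have h1 := ho v
    have h2 := hi v
    have : outdeg P v = 1 ↔ indeg P v = 1 := by
      constructor
      · intro h
        have : v ∈ B := hABeq ▸ mem_filter.mpr ⟨mem_univ _, h⟩
        exact (mem_filter.mp this).2
      · intro h
        have : v ∈ A := hABeq ▸ mem_filter.mpr ⟨mem_univ _, h⟩
        exact (mem_filter.mp this).2
    omega
  exact hne.ne_empty (hacyc P (Finset.Subset.refl P) hbal)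

lemma my_exists_list {V : Type*} [Fintype V] [DecidableEq V] :
    ∀ (n : ℕ) (P : Finset (V × V)), P.card ≤ n → (∀ e ∈ P, e.1 ≠ e.2) → IsPathSystem P →
      ∃ l : List V, l.Nodup ∧ (∀ x, x ∈ l) ∧ ∀ e ∈ P, [e.1, e.2] <:+: l := by
  intro n
  induction n with
  | zero =>
    intro P hc _ _
    have hPe : P = ∅ := Finset.card_eq_zero.mp (Nat.le_zero.mp hc)
    exact ⟨Finset.univ.toList, Finset.nodup_toList _, fun x => by simp, by simp [hPe]⟩
  | succ n ih =>
    intro P hc h0 hP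
    rcases P.eq_empty_or_nonempty with rfl | hne
    · exact ⟨Finset.univ.toList, Finset.nodup_toList _, fun x => by simp, by simp⟩
    obtain ⟨e, heP, hind⟩ := my_exists_source hP hne
    obtain ⟨u, v⟩ := e
    simp only at hind
    set P' := P.erase (u, v) with hP'def
    have hsub : P' ⊆ P := Finset.erase_subset _ _
    have hPS' : IsPathSystem P' := by
      refine ⟨fun w => le_trans (Finset.card_le_card ?_) (hP.1 w),
        fun w => le_trans (Finset.card_le_card ?_) (hP.2.1 w),
        fun T hT hbal => hP.2.2 T (hT.trans hsub) hbal⟩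
      · exact Finset.filter_subset_filter _ hsub
      · exact Finset.filter_subset_filter _ hsub
    have hc' : P'.card ≤ n := by
      rw [hP'def, Finset.card_erase_of_mem heP]
      omega
    obtain ⟨l', hnd', hmem', hinf'⟩ := ih P' hc' (fun e he => h0 e (hsub he)) hPS'
    have huv : u ≠ v := h0 (u, v) heP
    -- no edge of P enters u
    have h_no_in_u : ∀ e ∈ P, e.2 ≠ u := by
      intro e he h2
      have : e ∈ P.filter fun e => e.2 = u := mem_filter.mpr ⟨he, h2⟩
      have : (P.filter fun e => e.2 = u).Nonempty := ⟨e, this⟩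
      rw [← Finset.card_pos] at this
      rw [indeg] at hind
      omega
    -- no edge of P' leaves u
    have h_no_out_u : ∀ e ∈ P', e.1 ≠ u := by
      intro e he h1
      have hne' : e ≠ (u, v) := Finset.ne_of_mem_erase he
      have h1' : 1 < (P.filter fun e => e.1 = u).card := by
        rw [Finset.one_lt_card]
        exact ⟨e, mem_filter.mpr ⟨hsub he, h1⟩, (u, v), mem_filter.mpr ⟨heP, rfl⟩, hne'⟩
      have := hP.1 u
      rw [outdeg] at this
      omega
    -- no edge of P' enters v
    have h_no_in_v : ∀ e ∈ P', e.2 ≠ v := by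
      intro e he h2
      have hne' : e ≠ (u, v) := Finset.ne_of_mem_erase he
      have h1' : 1 < (P.filter fun e => e.2 = v).card := by
        rw [Finset.one_lt_card]
        exact ⟨e, mem_filter.mpr ⟨hsub he, h2⟩, (u, v), mem_filter.mpr ⟨heP, rfl⟩, hne'⟩
      have := hP.2.1 v
      rw [indeg] at this
      omega
    set m := l'.erase u with hmdef
    have hndm : m.Nodup := hnd'.erase u
    have hvm : v ∈ m := (List.mem_erase_of_ne huv.symm).mpr (hmem' v)
    obtain ⟨a, b, hm⟩ := List.append_of_mem hvm
    have hperm : (a ++ u :: v :: b).Perm l' := by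
      have h1 : (a ++ u :: v :: b).Perm (u :: (a ++ v :: b)) := List.perm_middle
      have h2 : l'.Perm (u :: m) := List.perm_cons_erase (hmem' u)
      rw [hm] at h2
      exact h1.trans h2.symm
    refine ⟨a ++ u :: v :: b, hperm.nodup_iff.mpr hnd',
      fun x => hperm.mem_iff.mpr (hmem' x), ?_⟩
    intro e he
    by_cases he' : e = (u, v)
    · subst he'
      exact ⟨a, b, by simp⟩
    · have heP' : e ∈ P' := Finset.mem_erase.mpr ⟨he', he⟩
      have h1 := hinf' e heP'
      have h2 : [e.1, e.2] <:+: m :=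
        my_infix_erase h1 (h_no_out_u e heP') (h_no_in_u e (hsub heP'))
      rw [hm] at h2
      have hndm' : (a ++ v :: b).Nodup := hm ▸ hndm
      exact my_infix_transfer hndm' (h_no_in_v e heP') h2

theorem stmt10 {V : Type*} [Fintype V] [DecidableEq V]
    (h2 : 2 ≤ Fintype.card V)
    (P : Finset (V × V)) (hP0 : ∀ e ∈ P, e.1 ≠ e.2) (hP : IsPathSystem P) :
    (∃ T : Finset (V × V), IsHamCycle T ∧ P ⊆ T) ∧
    (∀ w : V × V → ℕ, (∀ e : V × V, w e ≤ 1) →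
      ∃ T : Finset (V × V), IsHamCycle T ∧ ∑ e ∈ P, w e ≤ ∑ e ∈ T, w e) := by
  obtain ⟨l, hnd, hmem, hinf⟩ := my_exists_list (V := V) P.card P le_rfl hP0 hP
  have htf : l.toFinset = univ := by
    ext x; simp [hmem x]
  have hlen : l.length = Fintype.card V := by
    rw [← List.toFinset_card_of_nodup hnd, htf, Finset.card_univ]
  have h2l : 2 ≤ l.length := by rw [hlen]; exact h2
  have hnotsingle : ∀ x : V, l ≠ [x] := by
    intro x hx; rw [hx] at h2l; simp at h2l
  have happly : ∀ e ∈ P, l.formPerm e.1 = e.2 := by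
    intro e he
    obtain ⟨s, t, hst⟩ := hinf e he
    have hst' : s ++ e.1 :: e.2 :: t = l := by rw [← hst]; simp
    subst hst'
    have hlt : s.length + 1 < (s ++ e.1 :: e.2 :: t).length := by simp
    have key := List.formPerm_apply_lt_getElem (s ++ e.1 :: e.2 :: t) hnd s.length hlt
    have h1 : (s ++ e.1 :: e.2 :: t)[s.length]'(by simp) = e.1 := by
      rw [List.getElem_append_right (Nat.le_refl _)]; simp
    have hgoal : (s ++ e.1 :: e.2 :: t)[s.length + 1]'(by simp) = e.2 := by
      rw [List.getElem_append_right (by omega)]; simp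
    rw [h1, hgoal] at key
    exact key
  have hHC : IsHamCycle (Finset.univ.image (fun v => (v, l.formPerm v))) := by
    refine ⟨l.formPerm, List.isCycle_formPerm hnd h2l, ?_, rfl⟩
    rw [List.support_formPerm_of_nodup l hnd hnotsingle, htf]
  have hPT : P ⊆ Finset.univ.image (fun v => (v, l.formPerm v)) := by
    intro e he
    refine Finset.mem_image.mpr ⟨e.1, mem_univ _, ?_⟩
    rw [happly e he]
  refine ⟨⟨_, hHC, hPT⟩, fun w _ => ⟨_, hHC, Finset.sum_le_sum_of_subset hPT⟩⟩
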